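/- Let λ > 0, κ > 0, and let φ be an integrable complex-valued function on ℝ⁴. Then lim_{γ→∞} ∫∫ D_κ(x⁰ − y⁰, x¹ − y¹, x² − y², γ·(x³ − y³))·|φ(x)|·|φ(y)| dx dy = 0, where the integral is over ℝ⁴ × ℝ⁴ and the argument of D_κ has its time component x⁰ − y⁰ and spatial components (x¹ − y¹, x² − y², γ(x³ − y³)). -/

import Mathlib

noncomputable section

open MeasureTheory Filter

/-- Minkowski space modeled as `ℝ × ℝ³` (time component and spatial part). -/
abbrev M : Type := ℝ × EuclideanSpace ℝ (Fin 3)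

/-- The commutator-bounding function `D_κ` (with length parameter `lam`). -/
def Dkappa (lam κ : ℝ) (a : M) : ℝ :=
  if ‖a.2‖ ^ 2 ≤ a.1 ^ 2 then 1
  else lam ^ κ / (lam + ‖a.2‖ - |a.1|) ^ κ

/-- Scale the third spatial coordinate of `v ∈ ℝ³` by `γ`. -/
def scale3 (γ : ℝ) (v : EuclideanSpace ℝ (Fin 3)) : EuclideanSpace ℝ (Fin 3) :=
  WithLp.toLp 2 (fun j => if j = 2 then γ * v j else v j)


lemma abs_lt_of_not (a : M) (h : ¬ ‖a.2‖ ^ 2 ≤ a.1 ^ 2) : |a.1| < ‖a.2‖ := by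
  nlinarith [abs_nonneg a.1, norm_nonneg a.2, sq_abs a.1]

lemma Dkappa_nonneg (lam κ : ℝ) (hlam : 0 < lam) (a : M) : 0 ≤ Dkappa lam κ a := by
  unfold Dkappa; split
  · norm_num
  · next h =>
    have h1 : (0:ℝ) < lam + ‖a.2‖ - |a.1| := by
      have := abs_lt_of_not a h; linarith
    positivity

lemma Dkappa_le_one (lam κ : ℝ) (hlam : 0 < lam) (hκ : 0 < κ) (a : M) :
    Dkappa lam κ a ≤ 1 := by
  unfold Dkappa; split
  · exact le_refl 1
  · next h =>
    have h2 := abs_lt_of_not a h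
    have hd : lam ≤ lam + ‖a.2‖ - |a.1| := by linarith
    have hdpos : (0:ℝ) < lam + ‖a.2‖ - |a.1| := lt_of_lt_of_le hlam hd
    rw [div_le_one (Real.rpow_pos_of_pos hdpos κ)]
    exact Real.rpow_le_rpow hlam.le hd hκ.le

lemma measurable_Dkappa (lam κ : ℝ) : Measurable (Dkappa lam κ) := by
  unfold Dkappa
  apply Measurable.ite
  · exact measurableSet_le (by fun_prop) (by fun_prop)
  · exact measurable_const
  · fun_prop

lemma measurable_scale3 (γ : ℝ) : Measurable (scale3 γ) := by
  unfold scale3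
  refine (WithLp.measurable_toLp 2 _).comp (measurable_pi_lambda _ fun j => ?_)
  by_cases h : j = 2 <;> simp only [h, if_true, if_false, if_pos, if_neg] <;> fun_prop

lemma coord_le_norm (v : EuclideanSpace ℝ (Fin 3)) (j : Fin 3) : |v j| ≤ ‖v‖ := by
  rw [EuclideanSpace.norm_eq]
  have h1 : |v j| = Real.sqrt (‖v j‖ ^ 2) := by
    rw [Real.sqrt_sq_eq_abs]; simp [Real.norm_eq_abs]
  rw [h1]
  apply Real.sqrt_le_sqrt
  exact Finset.single_le_sum (f := fun i => ‖v i‖ ^ 2) (fun i _ => by positivity)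
    (Finset.mem_univ j)

lemma tendsto_D (lam κ : ℝ) (hlam : 0 < lam) (hκ : 0 < κ) (t : ℝ)
    (v : EuclideanSpace ℝ (Fin 3)) (hv : v 2 ≠ 0) :
    Tendsto (fun γ : ℝ => Dkappa lam κ (t, scale3 γ v)) atTop (nhds 0) := by
  have hlow : ∀ γ : ℝ, 0 ≤ γ → γ * |v 2| ≤ ‖scale3 γ v‖ := by
    intro γ hγ
    have := coord_le_norm (scale3 γ v) 2
    have h2 : (scale3 γ v) 2 = γ * v 2 := by simp [scale3]
    rw [h2, abs_mul, abs_of_nonneg hγ] at this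
    exact this
  have hnorm : Tendsto (fun γ : ℝ => ‖scale3 γ v‖) atTop atTop := by
    apply tendsto_atTop_mono' atTop
      (Eventually.mono (eventually_ge_atTop 0) fun γ hγ => hlow γ hγ)
    exact Tendsto.atTop_mul_const (abs_pos.2 hv) tendsto_id
  have hbig : ∀ᶠ γ : ℝ in atTop, ‖scale3 γ v‖ > |t| := hnorm.eventually_gt_atTop _
  have heq : ∀ᶠ γ : ℝ in atTop,
      Dkappa lam κ (t, scale3 γ v) = lam ^ κ / (lam + ‖scale3 γ v‖ - |t|) ^ κ := by
    filter_upwards [hbig] with γ hγ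
    unfold Dkappa
    rw [if_neg]
    push_neg
    have h0 : (0:ℝ) ≤ |t| := abs_nonneg t
    calc t ^ 2 = |t| ^ 2 := (sq_abs t).symm
      _ < ‖scale3 γ v‖ ^ 2 := by nlinarith
  have hden : Tendsto (fun γ : ℝ => (lam + ‖scale3 γ v‖ - |t|) ^ κ) atTop atTop := by
    apply (tendsto_rpow_atTop hκ).comp
    have h1 : Tendsto (fun γ : ℝ => lam + ‖scale3 γ v‖) atTop atTop :=
      tendsto_atTop_add_const_left _ _ hnorm
    exact tendsto_atTop_add_const_right _ _ h1
  have := Tendsto.div_atTop (tendsto_const_nhds (x := lam ^ κ) (f := atTop)) hden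
  exact this.congr' (heq.mono fun γ h => h.symm)

lemma pi_hyperplane (c : ℝ) :
    (volume : Measure (Fin 3 → ℝ)) {g | g 2 = c} = 0 := by
  have hset : {g : Fin 3 → ℝ | g 2 = c}
      = Set.pi Set.univ (fun i => if i = 2 then ({c} : Set ℝ) else Set.univ) := by
    ext g
    simp only [Set.mem_setOf_eq, Set.mem_pi, Set.mem_univ, forall_true_left]
    constructor
    · intro h i; by_cases hi : i = 2 <;> simp [hi, h]
    · intro h; have := h 2; simpa using this
  rw [hset, volume_pi_pi]
  exact Finset.prod_eq_zero (Finset.mem_univ 2) (by simp)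

lemma e3_hyperplane (c : ℝ) :
    (volume : Measure (EuclideanSpace ℝ (Fin 3))) {w | w 2 = c} = 0 := by
  have hmp := EuclideanSpace.volume_preserving_symm_measurableEquiv_toLp (Fin 3)
  have hpre : (MeasurableEquiv.toLp 2 (Fin 3 → ℝ)).symm ⁻¹' {g : Fin 3 → ℝ | g 2 = c}
      = {w : EuclideanSpace ℝ (Fin 3) | w 2 = c} := rfl
  have := hmp.measure_preimage (s := {g : Fin 3 → ℝ | g 2 = c}) ?_
  · rw [hpre] at this; rw [this]; exact pi_hyperplane c
  · have : MeasurableSet {g : Fin 3 → ℝ | g 2 = c} :=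
      measurableSet_eq_fun (measurable_pi_apply 2) measurable_const
    exact this.nullMeasurableSet

/-- For integrable `φ` on `ℝ⁴`:
`∫∫ D_κ(x⁰−y⁰, x¹−y¹, x²−y², γ(x³−y³)) |φ(x)| |φ(y)| dx dy → 0` as `γ → ∞`. -/
theorem stmt18 (lam κ : ℝ) (hlam : 0 < lam) (hκ : 0 < κ)
    (φ : M → ℂ) (hφ : Integrable φ) :
    Tendsto (fun γ : ℝ => ∫ x : M, ∫ y : M,
        Dkappa lam κ (x.1 - y.1, scale3 γ (x.2 - y.2)) * (‖φ x‖ * ‖φ y‖))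
      atTop (nhds 0) := by
  set μ : Measure (M × M) := (volume : Measure M).prod (volume : Measure M) with hμ
  set g : M × M → ℝ := fun p => ‖φ p.1‖ * ‖φ p.2‖ with hgdef
  have hgi : Integrable g μ := hφ.norm.mul_prod hφ.norm
  set F : ℝ → M × M → ℝ := fun γ p =>
    Dkappa lam κ (p.1.1 - p.2.1, scale3 γ (p.1.2 - p.2.2)) * g p with hFdef
  have hmapm : ∀ γ : ℝ, Measurable (fun p : M × M =>
      ((p.1.1 - p.2.1, scale3 γ (p.1.2 - p.2.2)) : M)) := by
    intro γ
    apply Measurable.prod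
    · fun_prop
    · exact (measurable_scale3 γ).comp ((measurable_snd.comp measurable_fst).sub (measurable_snd.comp measurable_snd))
  have hFm : ∀ γ : ℝ, AEStronglyMeasurable (F γ) μ := fun γ =>
    (((measurable_Dkappa lam κ).comp (hmapm γ)).aestronglyMeasurable.mul
      hgi.aestronglyMeasurable)
  have hgnn : ∀ p, 0 ≤ g p := fun p => mul_nonneg (norm_nonneg _) (norm_nonneg _)
  have hFb : ∀ γ : ℝ, ∀ p, ‖F γ p‖ ≤ g p := by
    intro γ p
    rw [Real.norm_eq_abs, abs_of_nonneg
      (mul_nonneg (Dkappa_nonneg lam κ hlam _) (hgnn p))]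
    calc Dkappa lam κ _ * g p ≤ 1 * g p :=
          mul_le_mul_of_nonneg_right (Dkappa_le_one lam κ hlam hκ _) (hgnn p)
      _ = g p := one_mul _
  have hFint : ∀ γ : ℝ, Integrable (F γ) μ :=
    fun γ => hgi.mono' (hFm γ) (Eventually.of_forall (hFb γ))
  have key : ∀ γ : ℝ, (∫ x : M, ∫ y : M,
      Dkappa lam κ (x.1 - y.1, scale3 γ (x.2 - y.2)) * (‖φ x‖ * ‖φ y‖))
      = ∫ p, F γ p ∂μ := by
    intro γ
    rw [← MeasureTheory.integral_prod (f := fun p : M × M => F γ p) (hFint γ)]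
  have hae : ∀ᵐ p ∂μ, p.1.2 2 ≠ p.2.2 2 := by
    rw [Measure.ae_prod_iff_ae_ae]
    · refine Eventually.of_forall fun x => ?_
      rw [ae_iff]
      have hset : {y : M | ¬ x.2 2 ≠ y.2 2}
          = Set.univ ×ˢ {w : EuclideanSpace ℝ (Fin 3) | w 2 = x.2 2} := by
        ext y
        simp only [Set.mem_setOf_eq, not_not, Set.mem_prod, Set.mem_univ, true_and]
        exact ⟨fun h => h.symm, fun h => h.symm⟩
      rw [hset, Measure.volume_eq_prod, Measure.prod_prod, e3_hyperplane, mul_zero]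
    · have h1 : Measurable fun p : M × M => p.1.2 2 := by
        exact (measurable_pi_apply 2).comp ((WithLp.measurable_ofLp 2 _).comp (measurable_snd.comp measurable_fst))
      have h2 : Measurable fun p : M × M => p.2.2 2 := by
        exact (measurable_pi_apply 2).comp ((WithLp.measurable_ofLp 2 _).comp (measurable_snd.comp measurable_snd))
      exact (measurableSet_eq_fun h1 h2).compl
  have hlim : ∀ᵐ p ∂μ, Tendsto (fun γ => F γ p) atTop (nhds 0) := by
    filter_upwards [hae] with p hp
    have hv : (p.1.2 - p.2.2) 2 ≠ 0 := by
      intro h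
      apply hp
      have : (p.1.2 - p.2.2) 2 = p.1.2 2 - p.2.2 2 := rfl
      rw [this] at h
      linarith
    have := (tendsto_D lam κ hlam hκ (p.1.1 - p.2.1) (p.1.2 - p.2.2) hv).mul_const (g p)
    simpa using this
  have hDCT := tendsto_integral_filter_of_dominated_convergence (μ := μ)
    (F := F) (f := fun _ => (0:ℝ)) (bound := g)
    (Eventually.of_forall hFm)
    (Eventually.of_forall fun γ => Eventually.of_forall (hFb γ))
    hgi hlim
  simp only [integral_zero] at hDCT
  simpa only [key] using hDCT
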